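/- For every positive integer b, there exists a chordal bipartite graph G with box(G) > b. In particular, the class of chordal bipartite graphs has unbounded boxicity. -/

import Mathlib

open SimpleGraph Set

/-- `f` given by endpoint functions `a`, `b` is an interval representation of `I`. -/
def IsIntervalRep {V : Type*} (I : SimpleGraph V) (a b : V → ℝ) : Prop :=
  (∀ v, a v ≤ b v) ∧
    ∀ u v, I.Adj u v ↔ u ≠ v ∧ (Set.Icc (a u) (b u) ∩ Set.Icc (a v) (b v)).Nonempty

/-- `I` is an interval graph. -/
def IsIntervalGraph {V : Type*} (I : SimpleGraph V) : Prop :=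
  ∃ a b : V → ℝ, IsIntervalRep I a b

/-- `G` is the intersection graph of axis-parallel `k`-dimensional boxes. -/
def IsBoxRep {V : Type*} (G : SimpleGraph V) (k : ℕ) : Prop :=
  ∃ lo hi : V → Fin k → ℝ, (∀ v i, lo v i ≤ hi v i) ∧
    ∀ u v, G.Adj u v ↔ u ≠ v ∧
      ∀ i, (Set.Icc (lo u i) (hi u i) ∩ Set.Icc (lo v i) (hi v i)).Nonempty

/-- The boxicity of a graph: the least `k` such that `G` is an intersection graph of
axis-parallel `k`-dimensional boxes. -/
noncomputable def boxicity {V : Type*} (G : SimpleGraph V) : ℕ :=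
  sInf {k | IsBoxRep G k}

/-- The `k`-th bipartite power of `G`: join vertices at odd distance at most `k`. -/
def bipartitePower {V : Type*} (G : SimpleGraph V) (k : ℕ) : SimpleGraph V :=
  SimpleGraph.fromRel (fun u v => Odd (G.dist u v) ∧ G.dist u v ≤ k)

/-- Add to `G` all edges between distinct vertices of `B`. -/
def addCliqueOn {V : Type*} (G : SimpleGraph V) (B : Set V) : SimpleGraph V :=
  SimpleGraph.fromRel (fun u v => G.Adj u v ∨ (u ∈ B ∧ v ∈ B))

/-- `{A, B}` is a bipartition of `G`. -/
def IsBipartitionOf {V : Type*} (G : SimpleGraph V) (A B : Set V) : Prop :=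
  Disjoint A B ∧ A ∪ B = Set.univ ∧ ∀ u v, G.Adj u v → (u ∈ A ↔ v ∈ B)

/-- `G` has no induced cycle of length greater than `m`. -/
def HasNoInducedCycleGT {V : Type*} (G : SimpleGraph V) (m : ℕ) : Prop :=
  ∀ n : ℕ, m < n → IsEmpty (SimpleGraph.cycleGraph n ↪g G)

/-- Chordal bipartite graphs: bipartite with no induced cycle of length > 4. -/
def ChordalBipartite {V : Type*} (G : SimpleGraph V) : Prop :=
  (∃ A B : Set V, IsBipartitionOf G A B) ∧ HasNoInducedCycleGT G 4

/-- The closed neighbourhood `N[v]`. -/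
def closedNbhd {V : Type*} (G : SimpleGraph V) (v : V) : Set V :=
  insert v (G.neighborSet v)

/-- Two vertices are compatible if one closed neighbourhood contains the other. -/
def Compatible {V : Type*} (G : SimpleGraph V) (u v : V) : Prop :=
  closedNbhd G u ⊆ closedNbhd G v ∨ closedNbhd G v ⊆ closedNbhd G u

/-- A vertex is simple if all pairs in its closed neighbourhood are compatible. -/
def IsSimpleVertex {V : Type*} (G : SimpleGraph V) (v : V) : Prop :=
  ∀ x ∈ closedNbhd G v, ∀ y ∈ closedNbhd G v, Compatible G x y

namespace Stmt11Aux

def erel (N s t : ℕ) : Prop :=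
  s ≠ t ∧ s / N < s % N ∧ t / N < t % N ∧ (s % N ≤ t / N ∨ s / N = t % N)

/-- The chordal bipartite graph realizing the shift graph on `[N]` as the symmetric part. -/

def SG (N : ℕ) : SimpleGraph (Fin (2 * (N * N))) where
  Adj u v := (u.val < N * N ∧ N * N ≤ v.val ∧ erel N u.val (v.val - N * N)) ∨
             (v.val < N * N ∧ N * N ≤ u.val ∧ erel N v.val (u.val - N * N))
  symm := ⟨fun u v h => by tauto⟩
  loopless := ⟨fun u h => by rcases h with ⟨h1, h2, _⟩ | ⟨h1, h2, _⟩ <;> omega⟩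

lemma lex_div_mod {N a b : ℕ} (h : a < b) :
    a / N < b / N ∨ (a / N = b / N ∧ a % N < b % N) := by
  rcases Nat.lt_or_ge (a / N) (b / N) with h1 | h1
  · exact Or.inl h1
  · right
    have h2 : b / N ≤ a / N := h1
    have h3 : a / N ≤ b / N := Nat.div_le_div_right h.le
    have h4 : a / N = b / N := le_antisymm h3 h2
    refine ⟨h4, ?_⟩
    have ha : N * (a / N) + a % N = a := Nat.div_add_mod a N
    have hb : N * (b / N) + b % N = b := Nat.div_add_mod b N
    rw [h4] at ha
    omega

/-- The Γ-freeness core: with rows ordered by decreasing code and columns by increasing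
code, the pattern `erel` is Γ-free. -/

lemma gammaCore {N s s' t t' : ℕ} (hs : s' < s) (ht : t < t')
    (h1 : erel N s t) (h2 : erel N s t') (h3 : erel N s' t) : erel N s' t' := by
  obtain ⟨-, hact_s, hact_t, hd1⟩ := h1
  obtain ⟨-, -, hact_t', hd2⟩ := h2
  obtain ⟨-, hact_s', -, hd3⟩ := h3
  have hkk : t / N ≤ t' / N := Nat.div_le_div_right ht.le
  have hlex := lex_div_mod (N := N) hs
  have main : s' % N ≤ t' / N ∨ s' / N = t' % N := by
    rcases hd3 with hA | hB
    · exact Or.inl (le_trans hA hkk)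
    · -- i2 = l1
      rcases hd1 with hC | hD
      · -- j1 ≤ k1 : contradiction
        exfalso
        -- i2 = t % N > t / N ≥ s % N > s / N ≥ s' / N ... need i2 ≤ i1
        have : s' / N ≤ s / N := Nat.div_le_div_right hs.le
        omega
      · -- i1 = l1, so i2 = i1, j2 < j1
        have hii : s' / N = s / N := by omega
        have hjj : s' % N < s % N := by
          rcases hlex with h | h
          · omega
          · exact h.2
        rcases hd2 with hE | hF
        · exact Or.inl (by omega)
        · exact Or.inr (by omega)
  refine ⟨?_, hact_s', hact_t', main⟩
  -- s' ≠ t'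
  intro hEq
  subst hEq
  omega

lemma SG_adj_A {N : ℕ} {u v : Fin (2 * (N * N))} (h : (SG N).Adj u v) (hu : u.val < N * N) :
    N * N ≤ v.val ∧ erel N u.val (v.val - N * N) := by
  rcases h with ⟨h1, h2, h3⟩ | ⟨h1, h2, h3⟩
  · exact ⟨h2, h3⟩
  · omega

lemma SG_adj_of {N : ℕ} {u v : Fin (2 * (N * N))} (hu : u.val < N * N) (hv : N * N ≤ v.val)
    (he : erel N u.val (v.val - N * N)) : (SG N).Adj u v := Or.inl ⟨hu, hv, he⟩

open scoped Fin.NatCast Fin.CommRing in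
lemma SG_noCycles (N : ℕ) : HasNoInducedCycleGT (SG N) 4 := by
  intro n' hn'
  constructor
  intro f
  have hn5 : 5 ≤ n' := hn'
  haveI : NeZero n' := ⟨by omega⟩
  set m := N * N with hm
  -- basic Fin n' cast facts
  have hval : ∀ a : ℕ, a < n' → ((a : Fin n')).val = a := by
    intro a ha; rw [Fin.val_natCast]; exact Nat.mod_eq_of_lt ha
  have hcinj : ∀ a b : ℕ, a < n' → b < n' → (a : Fin n') = (b : Fin n') → a = b := by
    intro a b ha hb h
    have := congrArg Fin.val h
    rwa [hval a ha, hval b hb] at this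
  have hneg : ∀ j : ℕ, j ≤ n' → ((n' - j : ℕ) : Fin n') = -(j : Fin n') := by
    intro j hj
    have hadd : ((n' - j : ℕ) : Fin n') + (j : Fin n') = ((n' : ℕ) : Fin n') := by
      rw [← Nat.cast_add]; congr 1; omega
    rw [Fin.natCast_self] at hadd
    exact eq_neg_of_add_eq_zero_left hadd
  have h1v : (1 : Fin n').val = 1 := by
    rw [← Nat.cast_one]; exact hval 1 (by omega)
  -- generic adjacency around the cycle
  have hadj_cycle : ∀ (q : Fin n') (k : ℕ),
      (cycleGraph n').Adj (q + (k : Fin n')) (q + ((k + 1 : ℕ) : Fin n')) := by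
    intro q k
    rw [cycleGraph_adj']
    right
    have : q + ((k + 1 : ℕ) : Fin n') - (q + (k : Fin n')) = 1 := by
      push_cast
      ring
    rw [this, h1v]
  -- some vertex of the cycle is on the A side
  have hS : ∃ q : Fin n', (f q).val < m := by
    have hadj01 : (cycleGraph n').Adj ((0 : Fin n') + ((0:ℕ) : Fin n'))
        ((0 : Fin n') + ((0 + 1 : ℕ) : Fin n')) := hadj_cycle 0 0
    have hG := f.map_rel_iff.mpr hadj01
    rcases hG with ⟨h1, h2, h3⟩ | ⟨h1, h2, h3⟩
    · exact ⟨_, h1⟩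
    · exact ⟨_, h1⟩
  -- pick the maximal-code A-side vertex
  set S : Finset (Fin n') := Finset.univ.filter (fun q => (f q).val < m) with hSdef
  have hSne : S.Nonempty := by
    obtain ⟨q, hq⟩ := hS
    exact ⟨q, by simp [hSdef, hq]⟩
  obtain ⟨qs, hqsS, hqsmax⟩ := S.exists_max_image (fun q => (f q).val) hSne
  have hA : (f qs).val < m := by
    have := hqsS; simp [hSdef] at this; exact this
  set pos : ℕ → Fin n' := fun k => qs + (k : Fin n') with hposdef
  have hpos_adj : ∀ k : ℕ, (cycleGraph n').Adj (pos k) (pos (k + 1)) := fun k => hadj_cycle qs k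
  have hpos_inj : ∀ a b : ℕ, a < n' → b < n' → pos a = pos b → a = b := by
    intro a b ha hb h
    exact hcinj a b ha hb (by
      have := add_left_cancel h
      exact this)
  have hpos0 : pos 0 = qs := by simp [hposdef]
  have hposn : pos n' = pos 0 := by
    simp only [hposdef]
    rw [Fin.natCast_self, Nat.cast_zero]
  -- G-adjacencies around the cycle
  have hGadj : ∀ k : ℕ, (SG N).Adj (f (pos k)) (f (pos (k + 1))) := fun k =>
    f.map_rel_iff.mpr (hpos_adj k)
  -- the two neighbours of qs are B-side
  have e0 : (SG N).Adj (f qs) (f (pos 1)) := by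
    have := hGadj 0; rwa [hpos0] at this
  have e_last : (SG N).Adj (f (pos (n' - 1))) (f qs) := by
    have := hGadj (n' - 1)
    have heq : n' - 1 + 1 = n' := by omega
    rw [heq, hposn, hpos0] at this
    exact this
  obtain ⟨hB1, herel_s_t1⟩ := SG_adj_A e0 hA
  obtain ⟨hB2, herel_s_t2⟩ := SG_adj_A e_last.symm hA
  -- cycle non-adjacency facts
  have hval3 : ((3 : ℕ) : Fin n').val = 3 := hval 3 (by omega)
  have hvaln3 : ((n' - 3 : ℕ) : Fin n').val = n' - 3 := hval _ (by omega)
  have hkey : ∀ a b : ℕ, a < n' → b < n' → ((a : Fin n') - (b : Fin n') = ((3:ℕ) : Fin n') ∨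
      (a : Fin n') - (b : Fin n') = ((n' - 3 : ℕ) : Fin n')) →
      ¬ (cycleGraph n').Adj (pos a) (pos b) := by
    intro a b ha hb hdiff hadj
    rw [cycleGraph_adj'] at hadj
    have hsub : pos a - pos b = (a : Fin n') - (b : Fin n') := by
      simp only [hposdef]; ring
    have hsub' : pos b - pos a = (b : Fin n') - (a : Fin n') := by
      simp only [hposdef]; ring
    have hd2 : (b : Fin n') - (a : Fin n') = -((a : Fin n') - (b : Fin n')) := by ring
    rcases hdiff with h3 | h3 <;>
      rcases hadj with h | h
    · rw [hsub, h3, hval3] at h; omega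
    · rw [hsub', hd2, h3, ← hneg 3 (by omega), hvaln3] at h; omega
    · rw [hsub, h3, hvaln3] at h; omega
    · rw [hsub', hd2, h3, hneg 3 (by omega), neg_neg, hval3] at h; omega
  have hno1 : ¬ (cycleGraph n').Adj (pos 2) (pos (n' - 1)) := by
    apply hkey 2 (n' - 1) (by omega) (by omega)
    left
    rw [hneg 1 (by omega)]
    have : ((2 : ℕ) : Fin n') - -((1:ℕ) : Fin n') = ((2:ℕ) : Fin n') + ((1:ℕ) : Fin n') := by ring
    rw [this, ← Nat.cast_add]
  have hno2 : ¬ (cycleGraph n').Adj (pos (n' - 2)) (pos 1) := by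
    apply hkey (n' - 2) 1 (by omega) (by omega)
    right
    rw [hneg 2 (by omega)]
    have : -((2 : ℕ) : Fin n') - ((1:ℕ) : Fin n') = -(((2:ℕ) : Fin n') + ((1:ℕ) : Fin n')) := by
      ring
    rw [this, ← Nat.cast_add, ← hneg 3 (by omega)]
  -- now the two symmetric branches
  set t1 : ℕ := (f (pos 1)).val - m with ht1
  set t2 : ℕ := (f (pos (n' - 1))).val - m with ht2
  have hv12 : f (pos 1) ≠ f (pos (n' - 1)) := by
    intro h
    have := f.injective h
    have := hpos_inj 1 (n' - 1) (by omega) (by omega) this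
    omega
  have ht12 : t1 ≠ t2 := by
    intro h
    apply hv12
    apply Fin.ext
    omega
  rcases Nat.lt_or_ge t1 t2 with hlt | hge
  · -- t1 < t2 : next vertex pos 2
    have e1 : (SG N).Adj (f (pos 2)) (f (pos 1)) := (hGadj 1).symm
    -- pos 2 is A-side, with erel to t1
    have h2A : (f (pos 2)).val < m ∧ erel N (f (pos 2)).val t1 := by
      rcases e1 with ⟨h1, h2, h3⟩ | ⟨h1, h2, h3⟩
      · exact ⟨h1, h3⟩
      · omega
    have hsmem : pos 2 ∈ S := by simp [hSdef, h2A.1]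
    have hsle : (f (pos 2)).val ≤ (f qs).val := hqsmax _ hsmem
    have hsne : (f (pos 2)).val ≠ (f qs).val := by
      intro h
      have : f (pos 2) = f qs := Fin.ext h
      have := f.injective this
      rw [← hpos0] at this
      have := hpos_inj 2 0 (by omega) (by omega) this
      omega
    have hout := gammaCore (lt_of_le_of_ne hsle hsne) hlt herel_s_t1 herel_s_t2 h2A.2
    have : (SG N).Adj (f (pos 2)) (f (pos (n' - 1))) := by
      apply SG_adj_of h2A.1 hB2
      have : (f (pos (n' - 1))).val - m = t2 := rfl
      rw [this]; exact hout
    exact hno1 (f.map_rel_iff.mp this)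
  · have hlt : t2 < t1 := lt_of_le_of_ne hge (Ne.symm ht12)
    have e1 : (SG N).Adj (f (pos (n' - 2))) (f (pos (n' - 1))) := by
      have := hGadj (n' - 2)
      have heq : n' - 2 + 1 = n' - 1 := by omega
      rwa [heq] at this
    have h2A : (f (pos (n' - 2))).val < m ∧ erel N (f (pos (n' - 2))).val t2 := by
      rcases e1 with ⟨h1, h2, h3⟩ | ⟨h1, h2, h3⟩
      · exact ⟨h1, h3⟩
      · omega
    have hsmem : pos (n' - 2) ∈ S := by simp [hSdef, h2A.1]
    have hsle : (f (pos (n' - 2))).val ≤ (f qs).val := hqsmax _ hsmem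
    have hsne : (f (pos (n' - 2))).val ≠ (f qs).val := by
      intro h
      have : f (pos (n' - 2)) = f qs := Fin.ext h
      have := f.injective this
      rw [← hpos0] at this
      have := hpos_inj (n' - 2) 0 (by omega) (by omega) this
      omega
    have hout := gammaCore (lt_of_le_of_ne hsle hsne) hlt herel_s_t2 herel_s_t1 h2A.2
    have : (SG N).Adj (f (pos (n' - 2))) (f (pos 1)) := by
      apply SG_adj_of h2A.1 hB1
      have : (f (pos 1)).val - m = t1 := rfl
      rw [this]; exact hout
    exact hno2 (f.map_rel_iff.mp this)

lemma boxRep_mono {V : Type*} {G : SimpleGraph V} {k K : ℕ} (h : IsBoxRep G k) (hkK : k ≤ K) :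
    IsBoxRep G K := by
  obtain ⟨lo, hi, hlh, hadj⟩ := h
  refine ⟨fun v c => if hc : c.val < k then lo v ⟨c.val, hc⟩ else 0,
          fun v c => if hc : c.val < k then hi v ⟨c.val, hc⟩ else 1, ?_, ?_⟩
  · intro v c
    by_cases hc : c.val < k <;> simp [hc, hlh]
  · intro u v
    rw [hadj u v]
    constructor
    · rintro ⟨hne, hall⟩
      refine ⟨hne, fun c => ?_⟩
      by_cases hc : c.val < k
      · simpa [hc] using hall ⟨c.val, hc⟩
      · exact ⟨0, by simp [hc]⟩
    · rintro ⟨hne, hall⟩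
      refine ⟨hne, fun i => ?_⟩
      have := hall ⟨i.val, lt_of_lt_of_le i.2 hkK⟩
      simpa [i.2, Fin.eta] using this

lemma exists_boxRep {n : ℕ} (G : SimpleGraph (Fin n)) : IsBoxRep G (n * n) := by
  classical
  rcases Nat.eq_zero_or_pos n with hn | hn0
  · subst hn
    exact ⟨fun v => v.elim0, fun v => v.elim0, fun v => v.elim0, fun u => u.elim0⟩
  set P : Fin (n * n) → Fin n := fun c => ⟨c.val / n, by
    have := c.2
    exact Nat.div_lt_of_lt_mul (by omega)⟩ with hP
  set Q : Fin (n * n) → Fin n := fun c => ⟨c.val % n, Nat.mod_lt _ hn0⟩ with hQ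
  set act : Fin (n * n) → Prop := fun c => P c ≠ Q c ∧ ¬ G.Adj (P c) (Q c) with hact
  set lo : Fin n → Fin (n * n) → ℝ := fun w c => if act c ∧ w = Q c then 2 else 0 with hlo
  set hi : Fin n → Fin (n * n) → ℝ := fun w c => if act c ∧ w = P c then 0 else 2 with hhi
  have hloeq : ∀ (w : Fin n) (c : Fin (n * n)),
      lo w c = if act c ∧ w = Q c then 2 else 0 := fun w c => rfl
  have hhieq : ∀ (w : Fin n) (c : Fin (n * n)),
      hi w c = if act c ∧ w = P c then 0 else 2 := fun w c => rfl
  have hmem : ∀ (w : Fin n) (c : Fin (n * n)) (x : ℝ),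
      (act c ∧ w = Q c → x = 2) → (act c ∧ w = P c → x = 0) → (0 ≤ x) → (x ≤ 2) →
      x ∈ Icc (lo w c) (hi w c) := by
    intro w c x h1 h2 h3 h4
    rw [Set.mem_Icc, hloeq, hhieq]
    constructor
    · by_cases h : act c ∧ w = Q c
      · rw [if_pos h, h1 h]
      · rw [if_neg h]; exact h3
    · by_cases h : act c ∧ w = P c
      · rw [if_pos h, h2 h]
      · rw [if_neg h]; exact h4
  refine ⟨lo, hi, ?_, ?_⟩
  · intro v c
    rw [hloeq, hhieq]
    by_cases h1 : act c ∧ v = Q c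
    · rw [if_pos h1, if_neg (by
        rintro ⟨ha, hp⟩
        exact h1.1.1 (by rw [← hp, h1.2]))]
    · rw [if_neg h1]
      by_cases h2 : act c ∧ v = P c
      · rw [if_pos h2]
      · rw [if_neg h2]; norm_num
  · intro u v
    constructor
    · intro hadj
      refine ⟨G.ne_of_adj hadj, fun c => ?_⟩
      set x : ℝ := if act c ∧ (u = Q c ∨ v = Q c) then 2 else 0 with hx
      have hx02 : 0 ≤ x ∧ x ≤ 2 := by
        rw [hx]; split_ifs <;> norm_num
      refine ⟨x, hmem u c x ?_ ?_ hx02.1 hx02.2, hmem v c x ?_ ?_ hx02.1 hx02.2⟩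
      · rintro ⟨ha, hq⟩
        rw [hx, if_pos ⟨ha, Or.inl hq⟩]
      · rintro ⟨ha, hp⟩
        rw [hx, if_neg]
        rintro ⟨ha2, hq | hq⟩
        · exact ha.1 (by rw [← hp, hq])
        · exact ha.2 (by rw [← hp, ← hq]; exact hadj)
      · rintro ⟨ha, hq⟩
        rw [hx, if_pos ⟨ha, Or.inr hq⟩]
      · rintro ⟨ha, hp⟩
        rw [hx, if_neg]
        rintro ⟨ha2, hq | hq⟩
        · exact ha.2 (by rw [← hp, ← hq]; exact hadj.symm)
        · exact ha.1 (by rw [← hp, hq])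
    · rintro ⟨hne, hall⟩
      by_contra hnadj
      have hc : u.val * n + v.val < n * n := by
        have h1 : u.val + 1 ≤ n := u.2
        have h2 : v.val < n := v.2
        calc u.val * n + v.val < u.val * n + n := by omega
        _ = (u.val + 1) * n := by ring
        _ ≤ n * n := Nat.mul_le_mul_right n h1
      set c : Fin (n * n) := ⟨u.val * n + v.val, hc⟩ with hcdef
      have hPc : P c = u := by
        apply Fin.ext
        show (u.val * n + v.val) / n = u.val
        rw [Nat.add_comm, Nat.add_mul_div_right _ _ hn0, Nat.div_eq_of_lt v.2]
        omega
      have hQc : Q c = v := by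
        apply Fin.ext
        show (u.val * n + v.val) % n = v.val
        rw [Nat.add_comm, Nat.add_mul_mod_self_right]
        exact Nat.mod_eq_of_lt v.2
      have hac : act c := by
        rw [hact]
        dsimp only
        rw [hPc, hQc]
        exact ⟨hne, hnadj⟩
      obtain ⟨x, hxu, hxv⟩ := hall c
      rw [Set.mem_Icc] at hxu hxv
      have e1 : hi u c = 0 := by
        rw [hhieq, if_pos ⟨hac, hPc.symm⟩]
      have e2 : lo v c = 2 := by
        rw [hloeq, if_pos ⟨hac, hQc.symm⟩]
      rw [e1] at hxu
      rw [e2] at hxv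
      linarith [hxu.2, hxv.1]

def pcode (N : ℕ) (p : Fin N × Fin N) : ℕ := p.1.val * N + p.2.val

lemma pcode_lt {N : ℕ} (p : Fin N × Fin N) : pcode N p < N * N := by
  have h1 : p.1.val + 1 ≤ N := p.1.2
  have h2 : p.2.val < N := p.2.2
  calc pcode N p < p.1.val * N + N := by unfold pcode; omega
  _ = (p.1.val + 1) * N := by ring
  _ ≤ N * N := Nat.mul_le_mul_right N h1

lemma pcode_div {N : ℕ} (p : Fin N × Fin N) : pcode N p / N = p.1.val := by
  have hN0 : 0 < N := p.1.pos
  unfold pcode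
  rw [Nat.add_comm, Nat.add_mul_div_right _ _ hN0, Nat.div_eq_of_lt p.2.2]
  omega

lemma pcode_mod {N : ℕ} (p : Fin N × Fin N) : pcode N p % N = p.2.val := by
  unfold pcode
  rw [Nat.add_comm, Nat.add_mul_mod_self_right]
  exact Nat.mod_eq_of_lt p.2.2

def aVert (N : ℕ) (p : Fin N × Fin N) : Fin (2 * (N * N)) :=
  ⟨pcode N p, by have := pcode_lt p; omega⟩

def bVert (N : ℕ) (p : Fin N × Fin N) : Fin (2 * (N * N)) :=
  ⟨N * N + pcode N p, by have := pcode_lt p; omega⟩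

lemma aVert_val {N : ℕ} (p : Fin N × Fin N) : (aVert N p).val = pcode N p := rfl

lemma bVert_val {N : ℕ} (p : Fin N × Fin N) : (bVert N p).val = N * N + pcode N p := rfl

lemma bVert_sub {N : ℕ} (p : Fin N × Fin N) : (bVert N p).val - N * N = pcode N p := by
  rw [bVert_val]; omega

lemma pcode_ne {N : ℕ} {p q : Fin N × Fin N} (h : p.1.val ≠ q.1.val) :
    pcode N p ≠ pcode N q := by
  intro heq
  apply h
  rw [← pcode_div p, ← pcode_div q, heq]

lemma erel_shift1 {N : ℕ} (x y z : Fin N) (hxy : x.val < y.val) (hyz : y.val < z.val) :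
    erel N (pcode N (x, y)) (pcode N (y, z)) := by
  refine ⟨pcode_ne (by dsimp; omega), ?_, ?_, Or.inl ?_⟩
  · rw [pcode_div, pcode_mod]; exact hxy
  · rw [pcode_div, pcode_mod]; exact hyz
  · rw [pcode_mod, pcode_div]

lemma erel_shift2 {N : ℕ} (x y z : Fin N) (hxy : x.val < y.val) (hyz : y.val < z.val) :
    erel N (pcode N (y, z)) (pcode N (x, y)) := by
  refine ⟨pcode_ne (by dsimp; omega), ?_, ?_, Or.inr ?_⟩
  · rw [pcode_div, pcode_mod]; exact hyz
  · rw [pcode_div, pcode_mod]; exact hxy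
  · rw [pcode_div, pcode_mod]

lemma SG_nonadj_pair {N : ℕ} (p : Fin N × Fin N) : ¬ (SG N).Adj (aVert N p) (bVert N p) := by
  intro h
  rcases h with ⟨h1, h2, h3⟩ | ⟨h1, h2, h3⟩
  · rw [aVert_val, bVert_sub] at h3
    exact h3.1 rfl
  · rw [bVert_val] at h1
    omega

lemma SG_not_boxRep {b N : ℕ} (hN : 2 ^ (2 * b) < N) : ¬ IsBoxRep (SG N) b := by
  classical
  rintro ⟨lo, hi, hlh, hadj⟩
  have hN0 : 0 < N := by
    have : 0 < 2 ^ (2 * b) := Nat.pow_pos (by norm_num)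
    omega
  -- every pair is broken at some coordinate with an orientation
  have hbreak : ∀ p : Fin N × Fin N, ∃ cb : Fin b × Bool,
      (cb.2 = true ∧ hi (aVert N p) cb.1 < lo (bVert N p) cb.1) ∨
      (cb.2 = false ∧ hi (bVert N p) cb.1 < lo (aVert N p) cb.1) := by
    intro p
    have hne : aVert N p ≠ bVert N p := by
      intro h
      have := congrArg Fin.val h
      rw [aVert_val, bVert_val] at this
      have := pcode_lt p
      have : 0 < N * N := Nat.mul_pos hN0 hN0
      omega
    have hnot : ¬ (aVert N p ≠ bVert N p ∧ ∀ c, (Icc (lo (aVert N p) c) (hi (aVert N p) c) ∩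
        Icc (lo (bVert N p) c) (hi (bVert N p) c)).Nonempty) := by
      rw [← hadj (aVert N p) (bVert N p)]
      exact SG_nonadj_pair p
    push_neg at hnot
    obtain ⟨c, hcemp⟩ := hnot hne
    by_cases hor : hi (aVert N p) c < lo (bVert N p) c
    · exact ⟨(c, true), Or.inl ⟨rfl, hor⟩⟩
    by_cases hor2 : hi (bVert N p) c < lo (aVert N p) c
    · exact ⟨(c, false), Or.inr ⟨rfl, hor2⟩⟩
    exfalso
    push_neg at hor hor2
    rw [Set.eq_empty_iff_forall_notMem] at hcemp
    apply hcemp (max (lo (aVert N p) c) (lo (bVert N p) c))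
    refine ⟨?_, ?_⟩
    · rw [Set.mem_Icc]
      exact ⟨le_max_left _ _, max_le (hlh _ _) hor⟩
    · rw [Set.mem_Icc]
      exact ⟨le_max_right _ _, max_le hor2 (hlh _ _)⟩
  -- the separating map
  have hkey : ∀ x y : Fin N, x.val < y.val →
      (fun cb : Fin b × Bool => ∃ w : Fin N × Fin N, w.1 = x ∧ w.1.val < w.2.val ∧
        ((cb.2 = true ∧ hi (aVert N w) cb.1 < lo (bVert N w) cb.1) ∨
         (cb.2 = false ∧ hi (bVert N w) cb.1 < lo (aVert N w) cb.1))) ≠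
      (fun cb : Fin b × Bool => ∃ w : Fin N × Fin N, w.1 = y ∧ w.1.val < w.2.val ∧
        ((cb.2 = true ∧ hi (aVert N w) cb.1 < lo (bVert N w) cb.1) ∨
         (cb.2 = false ∧ hi (bVert N w) cb.1 < lo (aVert N w) cb.1))) := by
    intro x y hxy hTeq
    obtain ⟨cb, hcb⟩ := hbreak (x, y)
    have hx : ∃ w : Fin N × Fin N, w.1 = x ∧ w.1.val < w.2.val ∧
        ((cb.2 = true ∧ hi (aVert N w) cb.1 < lo (bVert N w) cb.1) ∨
         (cb.2 = false ∧ hi (bVert N w) cb.1 < lo (aVert N w) cb.1)) :=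
      ⟨(x, y), rfl, hxy, hcb⟩
    have hy := (congrFun hTeq cb) ▸ hx
    obtain ⟨w, hw1, hwlt, hwbrk⟩ := hy
    have hwe : w = (y, w.2) := by
      rw [← hw1]
    set z := w.2 with hzdef
    rw [hwe] at hwbrk hwlt
    dsimp only at hwlt
    -- pairs (x,y) and (y,z) broken with the same coordinate and orientation
    have hadj1 : (SG N).Adj (aVert N (x, y)) (bVert N (y, z)) := by
      apply SG_adj_of (by rw [aVert_val]; exact pcode_lt _) (by rw [bVert_val]; omega)
      rw [aVert_val, bVert_sub]
      exact erel_shift1 x y z hxy hwlt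
    have hadj2 : (SG N).Adj (aVert N (y, z)) (bVert N (x, y)) := by
      apply SG_adj_of (by rw [aVert_val]; exact pcode_lt _) (by rw [bVert_val]; omega)
      rw [aVert_val, bVert_sub]
      exact erel_shift2 x y z hxy hwlt
    obtain ⟨w1, hw1, hw1'⟩ := ((hadj _ _).mp hadj1).2 cb.1
    obtain ⟨w2, hw2, hw2'⟩ := ((hadj _ _).mp hadj2).2 cb.1
    rw [Set.mem_Icc] at hw1 hw1' hw2 hw2'
    have hA1 : lo (bVert N (y, z)) cb.1 ≤ hi (aVert N (x, y)) cb.1 := le_trans hw1'.1 hw1.2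
    have hA2 : lo (aVert N (x, y)) cb.1 ≤ hi (bVert N (y, z)) cb.1 := le_trans hw1.1 hw1'.2
    have hB1 : lo (bVert N (x, y)) cb.1 ≤ hi (aVert N (y, z)) cb.1 := le_trans hw2'.1 hw2.2
    have hB2 : lo (aVert N (y, z)) cb.1 ≤ hi (bVert N (x, y)) cb.1 := le_trans hw2.1 hw2'.2
    rcases hcb with ⟨ht, hlt1⟩ | ⟨ht, hlt1⟩ <;> rcases hwbrk with ⟨ht2, hlt2⟩ | ⟨ht2, hlt2⟩
    · linarith
    · rw [ht] at ht2; simp at ht2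
    · rw [ht] at ht2; simp at ht2
    · linarith
  have hTinj : Function.Injective (fun x : Fin N =>
      (fun cb : Fin b × Bool => ∃ w : Fin N × Fin N, w.1 = x ∧ w.1.val < w.2.val ∧
        ((cb.2 = true ∧ hi (aVert N w) cb.1 < lo (bVert N w) cb.1) ∨
         (cb.2 = false ∧ hi (bVert N w) cb.1 < lo (aVert N w) cb.1)))) := by
    intro x y h
    by_contra hne
    have hvne : x.val ≠ y.val := fun hv => hne (Fin.ext hv)
    rcases Nat.lt_or_ge x.val y.val with hlt | hge
    · exact hkey x y hlt h
    · exact hkey y x (by omega) h.symm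
  have hcard := Fintype.card_le_of_injective _ hTinj
  rw [Fintype.card_fin] at hcard
  have hcard2 : Fintype.card (Fin b × Bool → Prop) = 2 ^ (2 * b) := by
    rw [Fintype.card_fun]
    simp [Fintype.card_prod]
    ring
  rw [hcard2] at hcard
  omega

end Stmt11Aux

theorem stmt11 (b : ℕ) (hb : 0 < b) :
    ∃ (n : ℕ) (G : SimpleGraph (Fin n)), ChordalBipartite G ∧ b < boxicity G := by
  classical
  set N : ℕ := 2 ^ (2 * b) + 1 with hNdef
  refine ⟨2 * (N * N), Stmt11Aux.SG N, ⟨⟨{v | v.val < N * N}, {v | N * N ≤ v.val}, ?_, ?_, ?_⟩,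
    Stmt11Aux.SG_noCycles N⟩, ?_⟩
  · rw [Set.disjoint_left]
    intro v hv hv2
    simp only [Set.mem_setOf_eq] at hv hv2
    omega
  · apply Set.eq_univ_iff_forall.mpr
    intro v
    rcases Nat.lt_or_ge v.val (N * N) with h | h
    · exact Or.inl h
    · exact Or.inr h
  · intro u v h
    rcases h with ⟨h1, h2, -⟩ | ⟨h1, h2, -⟩
    · exact iff_of_true h1 h2
    · exact iff_of_false (by simp only [Set.mem_setOf_eq]; omega)
        (by simp only [Set.mem_setOf_eq]; omega)
  · have hne : {k | IsBoxRep (Stmt11Aux.SG N) k}.Nonempty :=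
      ⟨(2 * (N * N)) * (2 * (N * N)), Stmt11Aux.exists_boxRep _⟩
    have hmem : IsBoxRep (Stmt11Aux.SG N) (sInf {k | IsBoxRep (Stmt11Aux.SG N) k}) :=
      Nat.sInf_mem hne
    by_contra hle
    push_neg at hle
    have hle2 : sInf {k | IsBoxRep (Stmt11Aux.SG N) k} ≤ b := hle
    have hrep : IsBoxRep (Stmt11Aux.SG N) b := Stmt11Aux.boxRep_mono hmem hle2
    exact Stmt11Aux.SG_not_boxRep (by omega) hrep
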